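/- (Burbea–Rao) Let f : (0,∞) → ℝ be twice continuously differentiable with f''(x) > 0 for all x > 0, and let 0 < α < 1. Then the Jensen divergence j_f^α(p, q) = α·f(p) + (1−α)·f(q) − f(αp + (1−α)q) is jointly convex on {(p, q) ∈ ℝ² : p > 0, q > 0} if and only if the function x ↦ 1/f''(x) is concave on (0,∞). -/

import Mathlib

open Set Filter Topology

lemma aux_hasDerivAt (f : ℝ → ℝ) (hf : ContDiffOn ℝ 2 f (Set.Ioi 0)) {x : ℝ} (hx : 0 < x) :
    HasDerivAt f (deriv f x) x := by
  have h1 : DifferentiableOn ℝ f (Set.Ioi 0) := hf.differentiableOn (by norm_num)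
  exact (h1.differentiableAt (Ioi_mem_nhds hx)).hasDerivAt

lemma aux_cd1 (f : ℝ → ℝ) (hf : ContDiffOn ℝ 2 f (Set.Ioi 0)) :
    ContDiffOn ℝ 1 (deriv f) (Set.Ioi 0) :=
  hf.deriv_of_isOpen isOpen_Ioi (by norm_num)

lemma aux_hasDerivAt' (f : ℝ → ℝ) (hf : ContDiffOn ℝ 2 f (Set.Ioi 0)) {x : ℝ} (hx : 0 < x) :
    HasDerivAt (deriv f) (deriv (deriv f) x) x := by
  have h1 : DifferentiableOn ℝ (deriv f) (Set.Ioi 0) :=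
    (aux_cd1 f hf).differentiableOn (by norm_num)
  exact (h1.differentiableAt (Ioi_mem_nhds hx)).hasDerivAt

lemma aux_contg (f : ℝ → ℝ) (hf : ContDiffOn ℝ 2 f (Set.Ioi 0)) :
    ContinuousOn (deriv (deriv f)) (Set.Ioi 0) :=
  (aux_cd1 f hf).continuousOn_deriv_of_isOpen isOpen_Ioi (by norm_num)

lemma aux_comp (F F' : ℝ → ℝ) (hF : ∀ x : ℝ, 0 < x → HasDerivAt F (F' x) x)
    (a u : ℝ) {t : ℝ} (h : 0 < a + t * u) :
    HasDerivAt (fun s => F (a + s * u)) (u * F' (a + t * u)) t := by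
  have hinner : HasDerivAt (fun s : ℝ => a + s * u) (1 * u) t :=
    ((hasDerivAt_id t).mul_const u).const_add a
  have := (hF _ h).comp t hinner
  simpa [Function.comp_def, mul_comm] using this

lemma aux_deriv3 (F F' : ℝ → ℝ) (hF : ∀ x : ℝ, 0 < x → HasDerivAt F (F' x) x)
    (A B C a1 a2 a3 u1 u2 u3 : ℝ) {t : ℝ}
    (h1 : 0 < a1 + t * u1) (h2 : 0 < a2 + t * u2) (h3 : 0 < a3 + t * u3) :
    HasDerivAt (fun s => A * F (a1 + s * u1) + B * F (a2 + s * u2) - C * F (a3 + s * u3))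
      (A * (u1 * F' (a1 + t * u1)) + B * (u2 * F' (a2 + t * u2))
        - C * (u3 * F' (a3 + t * u3))) t :=
  (((aux_comp F F' hF a1 u1 h1).const_mul A).add
      ((aux_comp F F' hF a2 u2 h2).const_mul B)).sub
    ((aux_comp F F' hF a3 u3 h3).const_mul C)

lemma aux_cs (α u v gP gQ gM hP hQ hM : ℝ) (hα0 : 0 < α) (hα1 : α < 1)
    (hgP : 0 < gP) (hgQ : 0 < gQ) (hgM : 0 < gM)
    (eP : gP * hP = 1) (eQ : gQ * hQ = 1) (eM : gM * hM = 1)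
    (hconc : α * hP + (1 - α) * hQ ≤ hM) :
    (α * u + (1 - α) * v) ^ 2 * gM ≤ α * u ^ 2 * gP + (1 - α) * v ^ 2 * gQ := by
  have hhP : 0 < hP := by nlinarith
  have hhQ : 0 < hQ := by nlinarith
  have hsq : 0 ≤ (u * (gP * hQ) - v) ^ 2 * (gQ * hP) :=
    mul_nonneg (sq_nonneg _) (mul_pos hgQ hhP).le
  have key : (α * u + (1 - α) * v) ^ 2 ≤
      (α * u ^ 2 * gP + (1 - α) * v ^ 2 * gQ) * (α * hP + (1 - α) * hQ) := by
    have id1 : (α * u ^ 2 * gP + (1 - α) * v ^ 2 * gQ) * (α * hP + (1 - α) * hQ)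
        - (α * u + (1 - α) * v) ^ 2
        = α * (1 - α) * ((u * (gP * hQ) - v) ^ 2 * (gQ * hP)) := by
      linear_combination (α^2*u^2 - α*(1-α)*(u^2*gP*hQ-2*u*v)*gQ*hQ) * eP
        + ((1-α)^2*v^2 - α*(1-α)*(u^2*gP*hQ-2*u*v)) * eQ
    nlinarith [mul_nonneg (mul_nonneg hα0.le (by linarith : (0:ℝ) ≤ 1 - α)) hsq]
  have hA : 0 ≤ α * u ^ 2 * gP + (1 - α) * v ^ 2 * gQ := by
    have := mul_nonneg (mul_nonneg hα0.le (sq_nonneg u)) hgP.le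
    have := mul_nonneg (mul_nonneg (by linarith : (0:ℝ) ≤ 1 - α) (sq_nonneg v)) hgQ.le
    linarith
  have h2 : (α * u + (1 - α) * v) ^ 2 ≤
      (α * u ^ 2 * gP + (1 - α) * v ^ 2 * gQ) * hM :=
    key.trans (mul_le_mul_of_nonneg_left hconc hA)
  calc (α * u + (1 - α) * v) ^ 2 * gM ≤ (α * u ^ 2 * gP + (1 - α) * v ^ 2 * gQ) * hM * gM :=
        mul_le_mul_of_nonneg_right h2 hgM.le
    _ = α * u ^ 2 * gP + (1 - α) * v ^ 2 * gQ := by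
        rw [mul_assoc, mul_comm hM gM, eM, mul_one]

lemma aux_combo_pos {t p q : ℝ} (ht0 : 0 ≤ t) (ht1 : t ≤ 1) (hp : 0 < p) (hq : 0 < q) :
    0 < t * p + (1 - t) * q := by
  rcases lt_or_ge t 1 with h | h
  · have : 0 < (1 - t) * q := mul_pos (by linarith) hq
    nlinarith [mul_nonneg ht0 hp.le]
  · have h1 : t = 1 := le_antisymm ht1 h
    subst h1; simpa using hp

lemma aux_dense (h : ℝ → ℝ) (hcont : ContinuousOn h (Set.Ioi 0))
    (α : ℝ) (hα0 : 0 < α) (hα1 : α < 1)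
    (P : ∀ p q : ℝ, 0 < p → 0 < q → α * h p + (1 - α) * h q ≤ h (α * p + (1 - α) * q)) :
    ConcaveOn ℝ (Set.Ioi 0) h := by
  set S : Set ℝ := {t | t ∈ Icc (0:ℝ) 1 ∧
    ∀ p q : ℝ, 0 < p → 0 < q → t * h p + (1 - t) * h q ≤ h (t * p + (1 - t) * q)} with hS
  have h0 : (0:ℝ) ∈ S := by
    refine ⟨by norm_num, fun p q hp hq => ?_⟩; simp
  have h1 : (1:ℝ) ∈ S := by
    refine ⟨by norm_num, fun p q hp hq => ?_⟩; simp
  have hcl : ∀ s ∈ S, ∀ t ∈ S, α * s + (1 - α) * t ∈ S := by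
    rintro s ⟨⟨hs0, hs1⟩, hsP⟩ t ⟨⟨ht0, ht1⟩, htP⟩
    refine ⟨⟨by nlinarith, by nlinarith⟩, fun p q hp hq => ?_⟩
    have hP1 : 0 < s * p + (1 - s) * q := aux_combo_pos hs0 hs1 hp hq
    have hP2 : 0 < t * p + (1 - t) * q := aux_combo_pos ht0 ht1 hp hq
    have step1 := P _ _ hP1 hP2
    have step2 := hsP p q hp hq
    have step3 := htP p q hp hq
    have harg : (α * s + (1 - α) * t) * p + (1 - (α * s + (1 - α) * t)) * q
        = α * (s * p + (1 - s) * q) + (1 - α) * (t * p + (1 - t) * q) := by ring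
    rw [harg]
    nlinarith [mul_le_mul_of_nonneg_left step2 hα0.le,
      mul_le_mul_of_nonneg_left step3 (by linarith : (0:ℝ) ≤ 1 - α)]
  set c : ℝ := max α (1 - α) with hc
  have hc0 : 0 < c := lt_max_of_lt_left hα0
  have hc1 : c < 1 := max_lt hα1 (by linarith)
  have approx : ∀ n : ℕ, ∀ t ∈ Icc (0:ℝ) 1, ∃ s ∈ S, |t - s| ≤ c ^ n := by
    intro n
    induction n with
    | zero => intro t ⟨ht0, ht1⟩; exact ⟨0, h0, by simpa [abs_of_nonneg ht0] using ht1⟩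
    | succ n ih =>
      intro t ⟨ht0, ht1⟩
      have hne : (1:ℝ) - α ≠ 0 := by linarith
      have hne' : α ≠ 0 := ne_of_gt hα0
      rcases le_or_gt t (1 - α) with ht | ht
      · obtain ⟨s, hsS, hd⟩ := ih (t / (1 - α))
          ⟨div_nonneg ht0 (by linarith), (div_le_one (by linarith)).2 ht⟩
        refine ⟨α * 0 + (1 - α) * s, hcl 0 h0 s hsS, ?_⟩
        have : t - (α * 0 + (1 - α) * s) = (1 - α) * (t / (1 - α) - s) := by
          field_simp; ring
        rw [this, abs_mul, abs_of_nonneg (by linarith : (0:ℝ) ≤ 1 - α), pow_succ']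
        exact mul_le_mul (le_max_right _ _) hd (abs_nonneg _) hc0.le
      · obtain ⟨s, hsS, hd⟩ := ih ((t - (1 - α)) / α)
          ⟨div_nonneg (by linarith) hα0.le, (div_le_one hα0).2 (by linarith)⟩
        refine ⟨α * s + (1 - α) * 1, hcl s hsS 1 h1, ?_⟩
        have : t - (α * s + (1 - α) * 1) = α * ((t - (1 - α)) / α - s) := by
          field_simp; ring
        rw [this, abs_mul, abs_of_nonneg hα0.le, pow_succ']
        exact mul_le_mul (le_max_left _ _) hd (abs_nonneg _) hc0.le
  refine ⟨convex_Ioi 0, fun p hp q hq a b ha hb hab => ?_⟩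
  simp only [smul_eq_mul]
  have hb' : b = 1 - a := by linarith
  subst hb'
  have ha1 : a ≤ 1 := by linarith
  choose s hsS hsd using fun n : ℕ => approx n a ⟨ha, ha1⟩
  have hsa : Tendsto s atTop (𝓝 a) := by
    rw [tendsto_iff_dist_tendsto_zero]
    refine squeeze_zero (fun n => dist_nonneg) (fun n => ?_)
      (tendsto_pow_atTop_nhds_zero_of_lt_one hc0.le hc1)
    rw [dist_comm, Real.dist_eq]
    exact hsd n
  have hmpos : (0:ℝ) < a * p + (1 - a) * q :=
    aux_combo_pos ha ha1 (mem_Ioi.1 hp) (mem_Ioi.1 hq)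
  have lim1 : Tendsto (fun n => s n * h p + (1 - s n) * h q) atTop
      (𝓝 (a * h p + (1 - a) * h q)) :=
    ((hsa.mul_const _).add ((tendsto_const_nhds.sub hsa).mul_const _))
  have limarg : Tendsto (fun n => s n * p + (1 - s n) * q) atTop (𝓝 (a * p + (1 - a) * q)) :=
    ((hsa.mul_const _).add ((tendsto_const_nhds.sub hsa).mul_const _))
  have lim2 : Tendsto (fun n => h (s n * p + (1 - s n) * q)) atTop
      (𝓝 (h (a * p + (1 - a) * q))) :=
    ((hcont.continuousAt (Ioi_mem_nhds hmpos)).tendsto).comp limarg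
  exact le_of_tendsto_of_tendsto' lim1 lim2
    (fun n => (hsS n).2 p q (mem_Ioi.1 hp) (mem_Ioi.1 hq))

set_option maxHeartbeats 1000000 in
/-- Burbea–Rao: For `f` twice continuously differentiable on `(0,∞)` with
`f'' > 0` there and `0 < α < 1`, the Jensen α-divergence
`(p,q) ↦ α f p + (1-α) f q - f (αp + (1-α)q)` is jointly convex on the open positive
quadrant iff `x ↦ 1 / f'' x` is concave on `(0,∞)`. -/
theorem statement5 (f : ℝ → ℝ) (hf : ContDiffOn ℝ 2 f (Set.Ioi 0))
    (hf'' : ∀ x ∈ Set.Ioi (0 : ℝ), 0 < deriv (deriv f) x)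
    (α : ℝ) (hα0 : 0 < α) (hα1 : α < 1) :
    ConvexOn ℝ {x : ℝ × ℝ | 0 < x.1 ∧ 0 < x.2}
        (fun x => α * f x.1 + (1 - α) * f x.2 - f (α * x.1 + (1 - α) * x.2)) ↔
      ConcaveOn ℝ (Set.Ioi 0) (fun x => 1 / deriv (deriv f) x) := by
  have hα1' : (0:ℝ) < 1 - α := by linarith
  set g : ℝ → ℝ := deriv (deriv f) with hg
  have hd1 : ∀ x : ℝ, 0 < x → HasDerivAt f (deriv f x) x := fun x hx => aux_hasDerivAt f hf hx
  have hd2 : ∀ x : ℝ, 0 < x → HasDerivAt (deriv f) (g x) x := fun x hx => aux_hasDerivAt' f hf hx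
  have hgc : ContinuousOn g (Set.Ioi 0) := aux_contg f hf
  have hgpos : ∀ x : ℝ, 0 < x → 0 < g x := fun x hx => hf'' x hx
  constructor
  · -- convex ⟹ concave
    intro hJ
    have P : ∀ p q : ℝ, 0 < p → 0 < q →
        α * (1 / g p) + (1 - α) * (1 / g q) ≤ 1 / g (α * p + (1 - α) * q) := by
      intro p q hp hq
      set u : ℝ := 1 / g p with hu
      set v : ℝ := 1 / g q with hv
      have hup : 0 < u := by rw [hu]; exact one_div_pos.2 (hgpos p hp)
      have hvp : 0 < v := by rw [hv]; exact one_div_pos.2 (hgpos q hq)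
      have hmp : 0 < α * p + (1 - α) * q := by nlinarith
      set w : ℝ := α * u + (1 - α) * v with hw
      have hwp : 0 < w := by rw [hw]; nlinarith
      set T : Set ℝ := {t | 0 < p + t * u ∧ 0 < q + t * v} with hT
      have hTopen : IsOpen T := by
        rw [hT, Set.setOf_and]
        exact (isOpen_lt continuous_const (by continuity)).inter
          (isOpen_lt continuous_const (by continuity))
      have h0T : (0:ℝ) ∈ T := by constructor <;> simp [hp, hq]
      have hmT : ∀ t ∈ T, 0 < α * p + (1 - α) * q + t * (α * u + (1 - α) * v) := by
        rintro t ⟨h1, h2⟩; nlinarith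
      set ψ : ℝ → ℝ := fun s => α * f (p + s * u) + (1 - α) * f (q + s * v)
        - 1 * f (α * p + (1 - α) * q + s * (α * u + (1 - α) * v)) with hψ
      set ψ₁ : ℝ → ℝ := fun s => (α * u) * deriv f (p + s * u)
        + ((1 - α) * v) * deriv f (q + s * v)
        - w * deriv f (α * p + (1 - α) * q + s * (α * u + (1 - α) * v)) with hψ₁
      set ψ₂ : ℝ → ℝ := fun s => (α * u) * (u * g (p + s * u))
        + ((1 - α) * v) * (v * g (q + s * v))
        - w * ((α * u + (1 - α) * v) * g (α * p + (1 - α) * q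
            + s * (α * u + (1 - α) * v))) with hψ₂
      have hψd : ∀ t ∈ T, HasDerivAt ψ (ψ₁ t) t := by
        rintro t ht
        have := aux_deriv3 f (deriv f) hd1 α (1 - α) 1 p q (α * p + (1 - α) * q)
          u v (α * u + (1 - α) * v) ht.1 ht.2 (hmT t ht)
        rw [hψ, hψ₁]
        convert this using 1
        ring
      have hψ₁d : ∀ t ∈ T, HasDerivAt ψ₁ (ψ₂ t) t := by
        rintro t ht
        exact aux_deriv3 (deriv f) g hd2 (α * u) ((1 - α) * v) w p q
          (α * p + (1 - α) * q) u v (α * u + (1 - α) * v) ht.1 ht.2 (hmT t ht)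
      -- convexity of ψ on T
      have hψconv : ConvexOn ℝ T ψ := by
        set L : ℝ →ᵃ[ℝ] ℝ × ℝ := AffineMap.lineMap ((p, q) : ℝ × ℝ) ((p + u, q + v) : ℝ × ℝ)
          with hL
        have hLt : ∀ t : ℝ, L t = (p + t * u, q + t * v) := by
          intro t
          rw [hL, AffineMap.lineMap_apply]
          simp [Prod.smul_mk, smul_eq_mul]
          constructor <;> ring
        have hpre : L ⁻¹' {x : ℝ × ℝ | 0 < x.1 ∧ 0 < x.2} = T := by
          ext t; simp [hLt t, hT]
        have hcomp := hJ.comp_affineMap L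
        rw [hpre] at hcomp
        have hfun : ((fun x : ℝ × ℝ => α * f x.1 + (1 - α) * f x.2
            - f (α * x.1 + (1 - α) * x.2)) ∘ L) = ψ := by
          funext t
          simp only [Function.comp_apply, hLt t, hψ]
          ring_nf
        rwa [hfun] at hcomp
      -- second derivative at 0 is nonnegative
      have hψ₂0 : 0 ≤ ψ₂ 0 := by
        by_contra hneg
        push_neg at hneg
        have hψ₂cont : ContinuousOn ψ₂ T := by
          have c1 : ContinuousOn (fun t => g (p + t * u)) T :=
            hgc.comp ((continuous_const.add (continuous_id.mul continuous_const)).continuousOn)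
              (fun t ht => ht.1)
          have c2 : ContinuousOn (fun t => g (q + t * v)) T :=
            hgc.comp ((continuous_const.add (continuous_id.mul continuous_const)).continuousOn)
              (fun t ht => ht.2)
          have c3 : ContinuousOn
              (fun t => g (α * p + (1 - α) * q + t * (α * u + (1 - α) * v))) T :=
            hgc.comp ((continuous_const.add (continuous_id.mul continuous_const)).continuousOn)
              (fun t ht => hmT t ht)
          exact ((continuousOn_const.mul (continuousOn_const.mul c1)).add
            (continuousOn_const.mul (continuousOn_const.mul c2))).sub
            (continuousOn_const.mul (continuousOn_const.mul c3))
        have hca : ContinuousAt ψ₂ 0 := hψ₂cont.continuousAt (hTopen.mem_nhds h0T)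
        have hev : ∀ᶠ t in 𝓝 (0:ℝ), ψ₂ t < 0 ∧ t ∈ T := by
          filter_upwards [hca.tendsto.eventually_lt_const hneg,
            hTopen.mem_nhds h0T] with t h1 h2
          exact ⟨h1, h2⟩
        obtain ⟨ε, hε, hball⟩ := Metric.eventually_nhds_iff.1 hev
        set δ : ℝ := ε / 2 with hδ
        have hδ0 : 0 < δ := by positivity
        have hsub : Icc (-δ) δ ⊆ {t | ψ₂ t < 0 ∧ t ∈ T} := by
          intro t ⟨h1, h2⟩
          apply hball
          rw [Real.dist_eq, sub_zero, abs_lt]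
          constructor <;> linarith
        have hTsub : Icc (-δ) δ ⊆ T := fun t ht => (hsub ht).2
        have hcont : ContinuousOn ψ (Icc (-δ) δ) := fun t ht =>
          ((hψd t (hTsub ht)).continuousAt).continuousWithinAt
        have hsc : StrictConcaveOn ℝ (Icc (-δ) δ) ψ := by
          apply strictConcaveOn_of_deriv2_neg (convex_Icc _ _) hcont
          intro x hx
          rw [interior_Icc] at hx
          have hxT : x ∈ T := hTsub ⟨hx.1.le, hx.2.le⟩
          have e1 : deriv ψ =ᶠ[𝓝 x] ψ₁ := by
            filter_upwards [hTopen.mem_nhds hxT] with t ht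
            exact (hψd t ht).deriv
          have e2 : deriv^[2] ψ x = deriv (deriv ψ) x := rfl
          rw [e2, e1.deriv_eq, (hψ₁d x hxT).deriv]
          exact (hsub ⟨hx.1.le, hx.2.le⟩).1
        have hmem1 : -δ ∈ T := hTsub ⟨le_refl _, by linarith⟩
        have hmem2 : δ ∈ T := hTsub ⟨by linarith, le_refl _⟩
        have hlt := hsc.2 (⟨le_refl _, by linarith⟩ : -δ ∈ Icc (-δ) δ)
          (⟨by linarith, le_refl _⟩ : δ ∈ Icc (-δ) δ) (by intro h; linarith [hδ0])
          (by norm_num : (0:ℝ) < 1/2) (by norm_num : (0:ℝ) < 1/2) (by norm_num)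
        have hle := hψconv.2 hmem1 hmem2
          (by norm_num : (0:ℝ) ≤ 1/2) (by norm_num : (0:ℝ) ≤ 1/2) (by norm_num)
        simp only [smul_eq_mul] at hlt hle
        rw [show (1/2 : ℝ) * (-δ) + (1/2 : ℝ) * δ = 0 by ring] at hlt hle
        linarith
      -- unfold ψ₂ 0 and conclude
      have egp : u * g p = 1 := by
        rw [hu, one_div, inv_mul_cancel₀ (ne_of_gt (hgpos p hp))]
      have egq : v * g q = 1 := by
        rw [hv, one_div, inv_mul_cancel₀ (ne_of_gt (hgpos q hq))]
      have hgm : 0 < g (α * p + (1 - α) * q) := hgpos _ hmp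
      have e0 : ψ₂ 0 = (α * u) * (u * g p) + ((1 - α) * v) * (v * g q)
          - w * ((α * u + (1 - α) * v) * g (α * p + (1 - α) * q)) := by
        rw [hψ₂]; norm_num
      have e1 : (α * u) * (u * g p) = α * u := by rw [egp, mul_one]
      have e2 : ((1 - α) * v) * (v * g q) = (1 - α) * v := by rw [egq, mul_one]
      rw [e0, e1, e2] at hψ₂0
      rw [le_div_iff₀ hgm]
      nlinarith [hψ₂0, hwp, hgm, hw, mul_pos hwp hgm]
    exact aux_dense _ (continuousOn_const.div hgc
      (fun x hx => ne_of_gt (hgpos x hx))) α hα0 hα1 P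
  · -- concave ⟹ convex
    intro hconc
    refine ⟨((convex_Ioi (0:ℝ)).prod (convex_Ioi 0)), ?_⟩
    rintro x ⟨hx1, hx2⟩ y ⟨hy1, hy2⟩ a b ha hb hab
    have ha' : a = 1 - b := by linarith
    subst ha'
    have hb1 : b ≤ 1 := by linarith
    set p : ℝ := x.1 with hp
    set q : ℝ := x.2 with hq
    set u : ℝ := y.1 - x.1 with hu
    set v : ℝ := y.2 - x.2 with hv
    have hposP : ∀ t : ℝ, 0 ≤ t → t ≤ 1 → 0 < p + t * u := by
      intro t ht0 ht1
      have := aux_combo_pos ht0 ht1 hy1 hx1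
      rw [hp, hu]; nlinarith
    have hposQ : ∀ t : ℝ, 0 ≤ t → t ≤ 1 → 0 < q + t * v := by
      intro t ht0 ht1
      have := aux_combo_pos ht0 ht1 hy2 hx2
      rw [hq, hv]; nlinarith
    have hposM : ∀ t : ℝ, 0 ≤ t → t ≤ 1 →
        0 < α * p + (1 - α) * q + t * (α * u + (1 - α) * v) := by
      intro t ht0 ht1
      have h1 := hposP t ht0 ht1
      have h2 := hposQ t ht0 ht1
      nlinarith
    set ψ : ℝ → ℝ := fun s => α * f (p + s * u) + (1 - α) * f (q + s * v)
      - 1 * f (α * p + (1 - α) * q + s * (α * u + (1 - α) * v)) with hψ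
    set ψ₁ : ℝ → ℝ := fun s => (α * u) * deriv f (p + s * u)
      + ((1 - α) * v) * deriv f (q + s * v)
      - (α * u + (1 - α) * v) * deriv f (α * p + (1 - α) * q
          + s * (α * u + (1 - α) * v)) with hψ₁
    set ψ₂ : ℝ → ℝ := fun s => (α * u) * (u * g (p + s * u))
      + ((1 - α) * v) * (v * g (q + s * v))
      - (α * u + (1 - α) * v) * ((α * u + (1 - α) * v) * g (α * p + (1 - α) * q
          + s * (α * u + (1 - α) * v))) with hψ₂
    have hψd : ∀ t : ℝ, 0 ≤ t → t ≤ 1 → HasDerivAt ψ (ψ₁ t) t := by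
      intro t ht0 ht1
      have := aux_deriv3 f (deriv f) hd1 α (1 - α) 1 p q (α * p + (1 - α) * q)
        u v (α * u + (1 - α) * v) (hposP t ht0 ht1) (hposQ t ht0 ht1) (hposM t ht0 ht1)
      convert this using 1
      rw [hψ₁]; ring
    have hψ₁d : ∀ t : ℝ, 0 ≤ t → t ≤ 1 → HasDerivAt ψ₁ (ψ₂ t) t := fun t ht0 ht1 =>
      aux_deriv3 (deriv f) g hd2 (α * u) ((1 - α) * v) (α * u + (1 - α) * v)
        p q (α * p + (1 - α) * q) u v (α * u + (1 - α) * v)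
        (hposP t ht0 ht1) (hposQ t ht0 ht1) (hposM t ht0 ht1)
    have hψ₂nonneg : ∀ t : ℝ, 0 ≤ t → t ≤ 1 → 0 ≤ ψ₂ t := by
      intro t ht0 ht1
      set P : ℝ := p + t * u with hP
      set Q : ℝ := q + t * v with hQ
      have hPp : 0 < P := hposP t ht0 ht1
      have hQp : 0 < Q := hposQ t ht0 ht1
      have hMp : 0 < α * P + (1 - α) * Q := by nlinarith
      have harg : α * p + (1 - α) * q + t * (α * u + (1 - α) * v)
          = α * P + (1 - α) * Q := by rw [hP, hQ]; ring
      have hkey := hconc.2 (mem_Ioi.2 hPp) (mem_Ioi.2 hQp) hα0.le hα1'.le (by ring)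
      simp only [smul_eq_mul] at hkey
      have hcs := aux_cs α u v (g P) (g Q) (g (α * P + (1 - α) * Q))
        (1 / g P) (1 / g Q) (1 / g (α * P + (1 - α) * Q)) hα0 hα1
        (hgpos _ hPp) (hgpos _ hQp) (hgpos _ hMp)
        (mul_one_div_cancel (ne_of_gt (hgpos _ hPp)))
        (mul_one_div_cancel (ne_of_gt (hgpos _ hQp)))
        (mul_one_div_cancel (ne_of_gt (hgpos _ hMp)))
        hkey
      simp only [hψ₂]
      rw [harg]
      nlinarith [hcs]
    have hψconv : ConvexOn ℝ (Icc (0:ℝ) 1) ψ := by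
      apply convexOn_of_hasDerivWithinAt2_nonneg (convex_Icc 0 1)
        (f' := ψ₁) (f'' := ψ₂)
      · exact fun t ht => ((hψd t ht.1 ht.2).continuousAt).continuousWithinAt
      · intro t ht
        rw [interior_Icc] at ht
        exact ((hψd t ht.1.le ht.2.le).hasDerivWithinAt)
      · intro t ht
        rw [interior_Icc] at ht
        exact ((hψ₁d t ht.1.le ht.2.le).hasDerivWithinAt)
      · intro t ht
        rw [interior_Icc] at ht
        exact hψ₂nonneg t ht.1.le ht.2.le
    have key := hψconv.2 (left_mem_Icc.2 (by norm_num : (0:ℝ) ≤ 1))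
      (right_mem_Icc.2 (by norm_num : (0:ℝ) ≤ 1)) ha hb hab
    simp only [smul_eq_mul] at key ⊢
    rw [show (1 - b) * (0:ℝ) + b * 1 = b by ring] at key
    have e0 : ψ 0 = α * f x.1 + (1 - α) * f x.2 - f (α * x.1 + (1 - α) * x.2) := by
      rw [hψ, hp, hq]; norm_num
    have e1 : ψ 1 = α * f y.1 + (1 - α) * f y.2 - f (α * y.1 + (1 - α) * y.2) := by
      rw [hψ, hp, hq, hu, hv]; ring_nf
    have ebx : (1 - b) • x + b • y = ((p + b * u, q + b * v) : ℝ × ℝ) := by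
      rw [Prod.ext_iff]
      constructor <;> simp only [Prod.fst_add, Prod.snd_add, Prod.smul_fst, Prod.smul_snd,
        smul_eq_mul, hp, hq, hu, hv] <;> ring
    rw [ebx]
    have ebb : ψ b = α * f (p + b * u) + (1 - α) * f (q + b * v)
        - f (α * (p + b * u) + (1 - α) * (q + b * v)) := by
      rw [hψ]; ring_nf
    rw [e0, e1] at key
    show α * f (p + b * u) + (1 - α) * f (q + b * v)
        - f (α * (p + b * u) + (1 - α) * (q + b * v)) ≤ _
    linarith [key, ebb.symm.le, ebb.le]
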